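/- Let n be an odd positive integer and let q^{1/2} be a primitive n-th root of -1 (so (q^{1/2})^n = -1 and q = (q^{1/2})^2 is a primitive n-th root of unity). For any integer k, the absolute value of the sum ∑_{t=0}^{n-1} (-q^{1/2})^{k t^2} equals √(gcd(k,n)·n). -/

import Mathlib

open Complex Finset

theorem stmt_2 (n : ℕ) (hn : Odd n) (hpos : 0 < n) (k : ℤ)
    (ζ : ℂ) (hζ : ζ = Complex.exp (Real.pi * Complex.I / n)) :
    ‖∑ t ∈ Finset.range n, (-ζ) ^ (k * (t : ℤ) ^ 2)‖ =
      Real.sqrt ((Int.gcd k n : ℝ) * n) := by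
  haveI : NeZero n := ⟨hpos.ne'⟩
  have hn0 : (n : ℂ) ≠ 0 := Nat.cast_ne_zero.mpr hpos.ne'
  set c : ℕ := (n + 1) / 2 with hcdef
  have hc2 : 2 * c = n + 1 := by
    obtain ⟨j, hj⟩ := hn; omega
  have hccop : c.Coprime n := by
    have h1 : (n + 1).Coprime n := by simpa using Nat.coprime_succ_self n
    exact Nat.Coprime.coprime_dvd_left ⟨2, by omega⟩ h1
  have hωeq : -ζ = Complex.exp (2 * Real.pi * Complex.I * ((c : ℂ) / (n : ℂ))) := by
    have h2c : ((2 : ℂ) * c) = (n : ℂ) + 1 := by exact_mod_cast congrArg (Nat.cast (R := ℂ)) hc2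
    have hexp : 2 * (Real.pi : ℂ) * Complex.I * ((c : ℂ) / (n : ℂ))
        = Real.pi * Complex.I + Real.pi * Complex.I / n := by
      rw [show (c : ℂ) = ((n : ℂ) + 1) / 2 by linear_combination h2c / 2]
      field_simp
    rw [hζ, hexp, Complex.exp_add, Complex.exp_pi_mul_I]
    ring
  have hprim : IsPrimitiveRoot (-ζ) n := by
    rw [hωeq]; exact Complex.isPrimitiveRoot_exp_of_coprime c n hpos.ne' hccop
  have hω1 : (-ζ) ^ n = 1 := hprim.pow_eq_one
  have hω0 : (-ζ) ≠ 0 := hprim.ne_zero hpos.ne'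
  have habs : ‖-ζ‖ = 1 := by
    have h : 2 * (Real.pi : ℂ) * Complex.I * ((c : ℂ) / (n : ℂ))
        = ((2 * Real.pi * c / n : ℝ) : ℂ) * Complex.I := by
      push_cast; field_simp
    rw [hωeq, h, Complex.norm_exp_ofReal_mul_I]
  -- congruence for zpow
  have hzcong : ∀ a b : ℤ, (n : ℤ) ∣ a - b → (-ζ) ^ a = (-ζ) ^ b := by
    rintro a b ⟨t, ht⟩
    have ha : a = b + n * t := by linarith
    rw [ha, zpow_add₀ hω0, zpow_mul, zpow_natCast, hω1, one_zpow, mul_one]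
  set ψ : AddChar (ZMod n) ℂ := AddChar.zmodChar n hω1 with hψdef
  have hψint : ∀ m : ℤ, ψ ((m : ZMod n)) = (-ζ) ^ m := by
    intro m
    rw [hψdef, AddChar.zmodChar_apply, ← zpow_natCast]
    apply hzcong
    have : ((((m : ZMod n).val : ℤ) - m : ℤ) : ZMod n) = 0 := by
      push_cast [ZMod.natCast_rightInverse (m : ZMod n)]
      ring
    exact (ZMod.intCast_zmod_eq_zero_iff_dvd _ n).mp this
  have hstar : ∀ x : ZMod n, (starRingEnd ℂ) (ψ x) = ψ (-x) := by
    intro x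
    have h1 : ‖ψ x‖ = 1 := by
      rw [hψdef, AddChar.zmodChar_apply, norm_pow, habs, one_pow]
    have h2 : ψ (-x) * ψ x = 1 := by
      rw [← AddChar.map_add_eq_mul, neg_add_cancel, AddChar.map_zero_eq_one]
    rw [← Complex.inv_eq_conj h1]
    exact (eq_inv_of_mul_eq_one_left h2).symm
  set K : ZMod n := (k : ZMod n) with hKdef
  have hS : (∑ t ∈ Finset.range n, (-ζ) ^ (k * (t : ℤ) ^ 2))
      = ∑ x : ZMod n, ψ (K * x ^ 2) := by
    refine Finset.sum_nbij' (fun t => ((t : ℕ) : ZMod n)) (fun x => x.val)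
      (fun a _ => Finset.mem_univ _) (fun x _ => Finset.mem_range.mpr (ZMod.val_lt x))
      (fun a ha => ZMod.val_cast_of_lt (Finset.mem_range.mp ha))
      (fun x _ => ZMod.natCast_rightInverse x) ?_
    intro t _
    rw [← hψint (k * (t : ℤ) ^ 2)]
    congr 1
    push_cast
    ring
  set S : ℂ := ∑ x : ZMod n, ψ (K * x ^ 2) with hSdef
  -- primitive character
  have hPrim : ∀ a : ZMod n, a ≠ 0 → ψ.mulShift a ≠ 1 :=
    AddChar.zmodChar_primitive_of_primitive_root n hprim
  have hinner : ∀ a : ZMod n, (∑ y : ZMod n, ψ (a * y)) = if a = 0 then (n : ℂ) else 0 := by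
    intro a
    by_cases ha : a = 0
    · simp [ha, ZMod.card]
    · rw [if_neg ha]
      have := AddChar.sum_eq_zero_of_ne_one (hPrim a ha)
      simpa using this
  -- two is a unit
  have h2unit : IsUnit (2 : ZMod n) := by
    rw [show ((2 : ZMod n)) = ((2 : ℕ) : ZMod n) by norm_num, ZMod.isUnit_iff_coprime]
    refine Nat.prime_two.coprime_iff_not_dvd.mpr ?_
    obtain ⟨j, hj⟩ := hn
    omega
  -- arithmetic of the gcd
  set d : ℕ := Int.gcd k n with hddef
  have hdpos : 0 < d := Int.gcd_pos_iff.mpr (Or.inr (by exact_mod_cast hpos.ne'))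
  have hdn : d ∣ n := Int.ofNat_dvd.mp (by exact_mod_cast (Int.gcd_dvd_right (a := k) (b := n)))
  set m : ℕ := n / d with hmdef
  have hdm : d * m = n := Nat.mul_div_cancel' hdn
  have hmpos : 0 < m := by
    rcases Nat.eq_zero_or_pos m with h | h
    · rw [h, mul_zero] at hdm; omega
    · exact h
  have hint : ∀ v : ℤ, ((n : ℤ) ∣ k * v) ↔ (m : ℤ) ∣ v := by
    intro v
    obtain ⟨k', hk'⟩ : (d : ℤ) ∣ k := Int.gcd_dvd_left k n
    have hd0 : (d : ℤ) ≠ 0 := by exact_mod_cast hdpos.ne'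
    have hco : Int.gcd (m : ℤ) k' = 1 := by
      have h0 : 0 < Int.gcd k (n : ℤ) := by exact_mod_cast hdpos
      have h3 := Int.gcd_div_gcd_div_gcd h0
      have h1 : k / (d : ℤ) = k' := by rw [hk']; exact Int.mul_ediv_cancel_left _ hd0
      have h2 : (n : ℤ) / (d : ℤ) = (m : ℤ) := by
        rw [show (n : ℤ) = (d : ℤ) * (m : ℤ) by exact_mod_cast hdm.symm]
        exact Int.mul_ediv_cancel_left _ hd0
      rw [show Int.gcd k (n:ℤ) = d from rfl] at h3
      rw [h1, h2] at h3
      rw [Int.gcd_comm]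
      exact h3
    constructor
    · intro hdd
      have h3 : (m : ℤ) ∣ k' * v := by
        have h4 : (d : ℤ) * (m : ℤ) ∣ (d : ℤ) * (k' * v) := by
          rw [show (d : ℤ) * (k' * v) = k * v by rw [hk']; ring,
            show (d : ℤ) * (m : ℤ) = (n : ℤ) by exact_mod_cast hdm]
          exact hdd
        exact (mul_dvd_mul_iff_left hd0).mp h4
      exact Int.dvd_of_dvd_mul_left_of_gcd_one (by rwa [mul_comm] at h3) hco
    · rintro ⟨w, hw⟩
      refine ⟨k' * w, ?_⟩
      rw [hk', hw, show (n : ℤ) = (d : ℤ) * (m : ℤ) by exact_mod_cast hdm.symm]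
      ring
  have hiff : ∀ u : ZMod n, (K * u = 0) ↔ m ∣ u.val := by
    intro u
    have hu : K * u = ((k * (u.val : ℤ) : ℤ) : ZMod n) := by
      push_cast
      rw [ZMod.natCast_rightInverse u]
    rw [hu, ZMod.intCast_zmod_eq_zero_iff_dvd, hint]
    exact Int.natCast_dvd_natCast
  have hcard : (Finset.univ.filter (fun u : ZMod n => K * u = 0)).card = d := by
    rw [show (Finset.univ.filter (fun u : ZMod n => K * u = 0))
        = Finset.univ.filter (fun u : ZMod n => m ∣ u.val) from
      Finset.filter_congr (fun u _ => by rw [hiff u])]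
    rw [← Finset.card_range d]
    apply Finset.card_bij' (fun u _ => u.val / m) (fun v _ => ((v * m : ℕ) : ZMod n))
    · intro u hu
      have hdvd := (Finset.mem_filter.mp hu).2
      have hlt : u.val < n := ZMod.val_lt u
      refine Finset.mem_range.mpr ((Nat.div_lt_iff_lt_mul hmpos).mpr ?_)
      calc u.val < n := hlt
        _ = d * m := hdm.symm
        _ = d * m := rfl
    · intro v hv
      have hvd : v < d := Finset.mem_range.mp hv
      have hlt : v * m < n := by
        calc v * m < d * m := (Nat.mul_lt_mul_right hmpos).mpr hvd
        _ = n := hdm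
      refine Finset.mem_filter.mpr ⟨Finset.mem_univ _, ?_⟩
      rw [ZMod.val_cast_of_lt hlt]
      exact dvd_mul_left m v
    · intro u hu
      have hdvd := (Finset.mem_filter.mp hu).2
      rw [Nat.div_mul_cancel hdvd]
      exact ZMod.natCast_rightInverse u
    · intro v hv
      have hvd : v < d := Finset.mem_range.mp hv
      have hlt : v * m < n := by
        calc v * m < d * m := (Nat.mul_lt_mul_right hmpos).mpr hvd
        _ = n := hdm
      rw [ZMod.val_cast_of_lt hlt, Nat.mul_div_cancel _ hmpos]
  have hmul : S * (starRingEnd ℂ) S = (n : ℂ) * (Int.gcd k n : ℂ) := by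
    have hconjS : (starRingEnd ℂ) S = ∑ y : ZMod n, ψ (-(K * y ^ 2)) := by
      rw [hSdef, map_sum]
      exact Finset.sum_congr rfl fun y _ => hstar _
    have step1 : S * (starRingEnd ℂ) S
        = ∑ y : ZMod n, ∑ u : ZMod n, ψ (K * u ^ 2) * ψ ((2 * K * u) * y) := by
      rw [hconjS, hSdef, Finset.sum_mul_sum]
      rw [Finset.sum_comm]
      refine Finset.sum_congr rfl fun y _ => ?_
      rw [← Equiv.sum_comp (Equiv.addLeft y) (fun x => ψ (K * x ^ 2) * ψ (-(K * y ^ 2)))]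
      refine Finset.sum_congr rfl fun u _ => ?_
      simp only [Equiv.coe_addLeft]
      rw [← AddChar.map_add_eq_mul, ← AddChar.map_add_eq_mul]
      congr 1
      ring
    rw [step1, Finset.sum_comm]
    have step2 : ∀ u : ZMod n, (∑ y : ZMod n, ψ (K * u ^ 2) * ψ ((2 * K * u) * y))
        = if K * u = 0 then (n : ℂ) else 0 := by
      intro u
      rw [← Finset.mul_sum, hinner]
      have h2iff : (2 * K * u = 0) ↔ (K * u = 0) := by
        rw [mul_assoc]
        exact h2unit.mul_right_eq_zero
      by_cases h : K * u = 0
      · rw [if_pos (h2iff.mpr h), if_pos h]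
        have hone : ψ (K * u ^ 2) = 1 := by
          rw [show K * u ^ 2 = (K * u) * u by ring, h, zero_mul, AddChar.map_zero_eq_one]
        rw [hone, one_mul]
      · rw [if_neg (fun hh => h (h2iff.mp hh)), if_neg h, mul_zero]
    rw [Finset.sum_congr rfl fun u _ => step2 u]
    rw [Finset.sum_ite, Finset.sum_const, Finset.sum_const_zero, add_zero, hcard]
    rw [nsmul_eq_mul]
    push_cast
    ring
  have hnormSq : Complex.normSq S = (Int.gcd k n : ℝ) * n := by
    rw [Complex.mul_conj] at hmul
    have h : ((Complex.normSq S : ℂ)) = (((Int.gcd k n : ℝ) * n : ℝ) : ℂ) := by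
      rw [hmul]; push_cast; ring
    exact_mod_cast h
  rw [hS, Complex.norm_def, hnormSq]
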